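/- Let H be a complex Hilbert space and let e, x ∈ B(H) with e a minimal partial isometry, ‖x‖ ≤ 1, and ‖e - x‖ = 2. Then e e* x e* e = - e, i.e. x agrees with -e on the support of e. -/

import Mathlib

open scoped InnerProductSpace

variable {H : Type*} [NormedAddCommGroup H] [InnerProductSpace ℂ H] [CompleteSpace H]

/-- The rank-one operator `η ⊗ ξ : x ↦ ⟨x, ξ⟩ η`. -/
noncomputable def rankOne (η ξ : H) : H →L[ℂ] H := (innerSL ℂ ξ).smulRight η

/-- Minimal (rank-one) partial isometries in `B(H)`. -/
def IsMinPI (v : H →L[ℂ] H) : Prop := ∃ ξ η : H, ‖ξ‖ = 1 ∧ ‖η‖ = 1 ∧ v = rankOne η ξ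

omit [CompleteSpace H] in
lemma rankOne_apply (η ξ u : H) : rankOne η ξ u = ⟪ξ, u⟫_ℂ • η := rfl

lemma star_rankOne (η ξ : H) : star (rankOne η ξ) = rankOne ξ η := by
  rw [ContinuousLinearMap.star_eq_adjoint]
  symm
  rw [ContinuousLinearMap.eq_adjoint_iff]
  intro u v
  simp [rankOne_apply, inner_smul_left, inner_smul_right]
  ring

set_option maxHeartbeats 1000000 in
theorem stmt10 (e x : H →L[ℂ] H) (he : IsMinPI e) (hx : ‖x‖ ≤ 1)
    (hdist : ‖e - x‖ = 2) :
    (e * star e) * x * (star e * e) = -e := by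
  obtain ⟨ξ, η, hξ, hη, rfl⟩ := he
  have hξξ : ⟪ξ, ξ⟫_ℂ = 1 := by
    rw [inner_self_eq_norm_sq_to_K, hξ]; norm_num
  have hηη : ⟪η, η⟫_ℂ = 1 := by
    rw [inner_self_eq_norm_sq_to_K, hη]; norm_num
  have hxξ : ‖x ξ‖ ≤ 1 := by
    calc ‖x ξ‖ ≤ ‖x‖ * ‖ξ‖ := x.le_opNorm ξ
    _ ≤ 1 := by rw [hξ]; simpa using hx
  have hD2 : ‖η - x ξ‖ ≤ 2 := by
    calc ‖η - x ξ‖ ≤ ‖η‖ + ‖x ξ‖ := norm_sub_le _ _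
    _ ≤ 2 := by rw [hη]; linarith
  have hD : 2 ≤ ‖η - x ξ‖ := by
    by_contra hcon
    push_neg at hcon
    set D := ‖η - x ξ‖ with hDdef
    have hDnn : 0 ≤ D := norm_nonneg _
    set ε : ℝ := 2 - D with hε
    have hεpos : 0 < ε := by linarith
    set δ : ℝ := min (ε/2) (ε^2/8) with hδdef
    have hδ1 : δ ≤ ε/2 := min_le_left _ _
    have hδ2 : δ ≤ ε^2/8 := min_le_right _ _
    have hδpos : 0 < δ := lt_min (by linarith) (by positivity)
    have hsq : Real.sqrt (2*δ) ≤ ε/2 := by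
      have h1 : 2*δ ≤ (ε/2)^2 := by nlinarith
      calc Real.sqrt (2*δ) ≤ Real.sqrt ((ε/2)^2) := Real.sqrt_le_sqrt h1
      _ = ε/2 := Real.sqrt_sq (by linarith)
    have hlt : 2 - δ < ‖rankOne η ξ - x‖ := by rw [hdist]; linarith
    obtain ⟨u, hu1, hu2⟩ := (rankOne η ξ - x).exists_lt_apply_of_lt_opNorm hlt
    set a := ⟪ξ, u⟫_ℂ with ha
    have happ : (rankOne η ξ - x) u = a • η - x u := by
      simp [rankOne_apply]; rfl
    rw [happ] at hu2
    have hxu : ‖x u‖ ≤ 1 := by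
      have := x.le_opNorm u
      nlinarith [norm_nonneg u, (norm_nonneg x : (0:ℝ) ≤ ‖x‖)]
    have ha_le1 : ‖a‖ ≤ 1 := by
      have h := norm_inner_le_norm (𝕜 := ℂ) ξ u
      rw [hξ, one_mul] at h
      exact le_trans (le_trans h (le_of_lt hu1)) le_rfl
    have ha1 : 1 - δ < ‖a‖ := by
      have h2 : ‖a • η - x u‖ ≤ ‖a‖ + 1 := by
        calc ‖a • η - x u‖ ≤ ‖a • η‖ + ‖x u‖ := norm_sub_le _ _
        _ ≤ ‖a‖ + 1 := by rw [norm_smul, hη]; linarith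
      linarith
    set w := u - a • ξ with hw
    have hwperp : ⟪a • ξ, w⟫_ℂ = 0 := by
      simp [hw, inner_sub_right, inner_smul_left, inner_smul_right, hξξ, ← ha, mul_comm]
      rw [Complex.mul_conj', norm_smul, hξ, mul_one, sub_self]
    have hpyth : ‖u‖^2 = ‖a‖^2 + ‖w‖^2 := by
      have huw : u = a • ξ + w := by simp [hw]
      calc ‖u‖^2 = ‖a • ξ + w‖^2 := by rw [← huw]
      _ = ‖a • ξ‖^2 + 2 * RCLike.re ⟪a • ξ, w⟫_ℂ + ‖w‖^2 := norm_add_sq _ _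
      _ = ‖a‖^2 + ‖w‖^2 := by rw [hwperp]; simp [norm_smul, hξ, mul_pow]
    have hwsq : ‖w‖^2 ≤ 2*δ := by
      nlinarith [norm_nonneg u, norm_nonneg a, norm_nonneg w]
    have hwle : ‖w‖ ≤ Real.sqrt (2*δ) := Real.le_sqrt_of_sq_le hwsq
    have hxw : ‖x w‖ ≤ ‖w‖ := by
      have := x.le_opNorm w
      nlinarith [norm_nonneg w]
    have hxuw : x u = a • x ξ + x w := by
      have huw : u = a • ξ + w := by simp [hw]
      rw [huw, map_add, map_smul]
    have hfinal : ‖a • η - x u‖ ≤ D + Real.sqrt (2*δ) := by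
      have heq : a • η - x u = a • (η - x ξ) - x w := by
        rw [hxuw, smul_sub]; abel
      calc ‖a • η - x u‖ = ‖a • (η - x ξ) - x w‖ := by rw [heq]
      _ ≤ ‖a • (η - x ξ)‖ + ‖x w‖ := norm_sub_le _ _
      _ ≤ ‖a‖ * D + ‖w‖ := by rw [norm_smul]; exact add_le_add le_rfl hxw
      _ ≤ D + Real.sqrt (2*δ) := by
          have : ‖a‖ * D ≤ D := by nlinarith
          linarith [le_trans hwle le_rfl]
    linarith [le_trans hsq le_rfl]
  have hDeq : ‖η - x ξ‖ = 2 := le_antisymm hD2 hD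
  set z := ⟪η, x ξ⟫_ℂ with hz
  have habs : ‖z‖ ≤ 1 := by
    have h := norm_inner_le_norm (𝕜 := ℂ) η (x ξ)
    rw [hη, one_mul] at h
    exact le_trans h hxξ
  have hre : z.re ≤ -1 := by
    have hsqr := @norm_sub_sq ℂ _ _ _ _ η (x ξ)
    rw [hDeq, hη] at hsqr
    have : RCLike.re z = z.re := rfl
    rw [← hz, this] at hsqr
    nlinarith [hxξ, norm_nonneg (x ξ)]
  have hre' : z.re = -1 := by
    have h1 : |z.re| ≤ ‖z‖ := Complex.abs_re_le_norm z
    have := abs_le.mp (le_trans h1 habs)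
    linarith [this.1]
  have him : z.im = 0 := by
    have h2 : z.re^2 + z.im^2 ≤ 1 := by
      have : Complex.normSq z = ‖z‖^2 := (Complex.sq_norm z).symm
      rw [Complex.normSq_apply] at this
      nlinarith [norm_nonneg z]
    nlinarith [sq_nonneg z.im]
  have key : ⟪η, x ξ⟫_ℂ = -1 := by
    rw [← hz]; apply Complex.ext <;> simp [hre', him]
  rw [star_rankOne]
  ext u
  simp [ContinuousLinearMap.mul_apply, rankOne_apply, inner_smul_right, hξξ, hηη, key,
    smul_smul, hξ, hη]
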